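/- The function W : (ℂ∖{0})² → ℂ defined by W(y_1, y_2) = 3y_1 + 4y_2 + y_1^{−1}y_2 + 4·y_1^{−1} + y_1^{−1}y_2^{−1} + (1/2)·y_2^{−1} − (5/2)·y_1 y_2^{−1} + y_1^{2} y_2^{−1} has exactly 8 critical points, and each of these critical points is nondegenerate. -/

import Mathlib

/-- The potential function of the monotone fiber `L(4,4.5)` in `X̂₉` with the chosen bulk deformation (energy factor dropped). -/
noncomputable def W : ℂ → ℂ → ℂ := fun y₁ y₂ =>
  3 * y₁ + 4 * y₂ + y₁⁻¹ * y₂ + 4 * y₁⁻¹ + y₁⁻¹ * y₂⁻¹ + (1 / 2) * y₂⁻¹ - (5 / 2) * y₁ * y₂⁻¹ + y₁ ^ 2 * y₂⁻¹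

/-- A point of `(ℂ∖{0})²` is a critical point of `W` if both partial
derivatives of `W` vanish there. -/
def IsCritPt (p : ℂ × ℂ) : Prop :=
  p.1 ≠ 0 ∧ p.2 ≠ 0 ∧
    deriv (fun z => W z p.2) p.1 = 0 ∧ deriv (fun z => W p.1 z) p.2 = 0

/-- The Hessian determinant
`(∂²W/∂y₁²)(∂²W/∂y₂²) - (∂²W/∂y₁∂y₂)²` of `W` at a point. -/
noncomputable def hessDet (p : ℂ × ℂ) : ℂ :=
  deriv (deriv (fun z => W z p.2)) p.1 * deriv (deriv (fun z => W p.1 z)) p.2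
    - (deriv (fun w => deriv (fun z => W z w) p.1) p.2) ^ 2

namespace WC

open Polynomial

noncomputable def eE (x : ℂ) : ℂ := 448*x^8 + (-1008)*x^7 + 2904*x^6 + (-5256)*x^5 + (-576)*x^4 + 4608*x^3 + 836*x^2 + (-864)*x^1 + (-192)*x^0
noncomputable def c1 (x : ℂ) : ℂ := 48*x^3 + 12*x^2 + (-64)*x^1 + (-16)*x^0
noncomputable def c0 (x : ℂ) : ℂ := 32*x^4 + (-36)*x^3 + (-18)*x^1 + (-8)*x^0
noncomputable def Pp (x y : ℂ) : ℂ := 4*x^3 + 6*x^2*y - 5*x^2 - 2*y^2 - 8*y - 2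
noncomputable def Qq (x y : ℂ) : ℂ := -2*x^3 + 5*x^2 + 8*x*y^2 + 2*y^2 - x - 2
noncomputable def Nf (x y : ℂ) : ℂ := (-17/4)*x^4*y^0 + 16*x^3*y^1 + 12*x^3*y^0 + (-5)*x^2*y^2 + (-40)*x^2*y^1 + (-15)*x^2*y^0 + 2*x^1*y^2 + 8*x^1*y^1 + 2*x^1*y^0 + (-1)*x^0*y^4 + 6*x^0*y^2 + 16*x^0*y^1 + 3*x^0*y^0
noncomputable def nf (x : ℂ) : ℂ := (-92028928)*x^16 + 234012672*x^15 + 305190912*x^14 + (-1088756736)*x^13 + (-305825344)*x^12 + 2008135168*x^11 + 7677952*x^10 + (-1705065984)*x^9 + 9168960*x^8 + 628708992*x^7 + 90905344*x^6 + (-29957632)*x^5 + (-15421968)*x^4 + (-27865344)*x^3 + (-15502848)*x^2 + (-3231744)*x^1 + (-233472)*x^0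

lemma idE (x y : ℂ) : (256*x^5*y^0 + (-384)*x^4*y^1 + (-224)*x^4*y^0 + (-192)*x^3*y^1 + (-72)*x^3*y^0 + 488*x^2*y^1 + (-144)*x^2*y^0 + 256*x^1*y^1 + (-100)*x^1*y^0 + 32*x^0*y^1 + (-16)*x^0*y^0) * Pp x y + (288*x^5*y^0 + 136*x^4*y^0 + (-96)*x^3*y^1 + (-840)*x^3*y^0 + (-24)*x^2*y^1 + (-192)*x^2*y^0 + 128*x^1*y^1 + 476*x^1*y^0 + 32*x^0*y^1 + 112*x^0*y^0) * Qq x y = eE x := by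
  simp only [Pp, Qq, eE]; ring

lemma idL (x y : ℂ) : (8*x + 2) * Pp x y + 2 * Qq x y = c1 x * y + c0 x := by
  simp only [Pp, Qq, c1, c0]; ring

lemma idP (x y : ℂ) : (c1 x)^2 * Pp x y = (288*x^5*y^0 + 136*x^4*y^0 + (-96)*x^3*y^1 + (-840)*x^3*y^0 + (-24)*x^2*y^1 + (-192)*x^2*y^0 + 128*x^1*y^1 + 476*x^1*y^0 + 32*x^0*y^1 + 112*x^0*y^0) * (c1 x * y + c0 x) + (-2) * eE x := by
  simp only [Pp, c1, c0, eE]; ring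

lemma idQ (x y : ℂ) : (c1 x)^2 * Qq x y = ((-256)*x^5*y^0 + 384*x^4*y^1 + 224*x^4*y^0 + 192*x^3*y^1 + 72*x^3*y^0 + (-488)*x^2*y^1 + 144*x^2*y^0 + (-256)*x^1*y^1 + 100*x^1*y^0 + (-32)*x^0*y^1 + 16*x^0*y^0) * (c1 x * y + c0 x) + (8*x + 2) * eE x := by
  simp only [Qq, c1, c0, eE]; ring

lemma idN (x y : ℂ) : (c1 x)^4 * Nf x y = (2170880*x^12*y^0 + (-602112)*x^11*y^1 + (-3585024)*x^11*y^0 + 73728*x^10*y^2 + (-95232)*x^10*y^1 + (-10572288)*x^10*y^0 + (-110592)*x^9*y^3 + (-46080)*x^9*y^2 + 2968576*x^9*y^1 + 15040128*x^9*y^0 + (-82944)*x^8*y^3 + (-233472)*x^8*y^2 + 1213312*x^8*y^1 + 21565312*x^8*y^0 + 421632*x^7*y^3 + 76224*x^7*y^2 + (-5702016)*x^7*y^1 + (-23393408)*x^7*y^0 + 330048*x^6*y^3 + 190208*x^6*y^2 + (-3233856)*x^6*y^1 + (-22082624)*x^6*y^0 + (-506880)*x^5*y^3 + 30688*x^5*y^2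 + 4679232*x^5*y^1 + 14133264*x^5*y^0 + (-435456)*x^4*y^3 + 37760*x^4*y^2 + 3278288*x^4*y^1 + 11982720*x^4*y^0 + 151552*x^3*y^3 + (-51456)*x^3*y^2 + (-1014912)*x^3*y^1 + (-1699272)*x^3*y^0 + 187392*x^2*y^3 + (-66560)*x^2*y^2 + (-1179328)*x^2*y^1 + (-2804320)*x^2*y^0 + 49152*x^1*y^3 + (-20992)*x^1*y^2 + (-294400)*x^1*y^1 + (-692608)*x^1*y^0 + 4096*x^0*y^3 + (-2048)*x^0*y^2 + (-23552)*x^0*y^1 + (-53760)*x^0*y^0) * (c1 x * y + c0 x) + nf x := by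
  simp only [Nf, c1, c0, nf]; ring

lemma bez_c1 (x : ℂ) : ((-330808613/3340344150)*x^2 + (10935/19794632)*x^1 + (10642136191/80168259600)*x^0) * eE x + ((4631320582/5010516225)*x^7 + (-4641654157/2004206490)*x^6 + (65894446337/10021032450)*x^5 + (-501601463969/40084129800)*x^4 + (78756691589/40084129800)*x^3 + (18169116803/2004206490)*x^2 + (-568489657/1027798200)*x^1 + (-44238716839/26722753200)*x^0) * c1 x = 1 := by
  simp only [eE, c1]; ring

lemma bez_c0 (x : ℂ) : ((-166419179/7288023600)*x^3 + (401852039/11660837760)*x^2 + (-160470379/14576047200)*x^1 + (399472519/23321675520)*x^0) * eE x + ((1164934253/3644011800)*x^7 + (-12274614821/14576047200)*x^6 + (68931297313/29152094400)*x^5 + (-26963614259/5830418880)*x^4 + (8683378369/7288023600)*x^3 + (5476428467/1822005900)*x^2 + (-567322579/1494979200)*x^1 + (-520939579/971736480)*x^0) * c0 x = 1 := by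
  simp only [eE, c0]; ring

lemma bez_n (x : ℂ) : ((2984830689564605741921788667358458054609/1586465704026263304107208321078960000)*x^15 + (-1658261180740762768514915993344997278033/317293140805252660821441664215792000)*x^14 + (-63600634646717250614753979003833934185291/12691725632210106432857666568631680000)*x^13 + (594892918506098227620466618931205740372227/25383451264420212865715333137263360000)*x^12 + (302519829152955019170815084213371652026009/406135220230723405851445330196213760000)*x^11 + (-28190070221232399542926819437355170420641/683729326987749841500749714135040000)*x^10 + (241959759351516501734963984518843836775129/25383451264420212865715333137263360000)*x^9 + (150543233436452869468497252900270984154529/4615172957167311430130060570411520000)*x^8 + (-3189586168849396765926048351656644938441521/406135220230723405851445330196213760000)*x^7 + (-55885845008805817613702330197626019933469/5076690252884042573143066627452672000)*x^6 + (37004049260489832837625813400936272144939/50766902528840425731430666274526720000)*x^5 + (1244516614779065095139035394821709377769/2820383473824468096190592570807040000)*x^4 + (38182816506298645664130468570512956059001/180504542324765958156197924531650560000)*x^3 + (140790740361525161546933178249463526771329/270756813487148937234296886797475840000)*x^2 + (205953791541014456519929905537438670201/1057643802684175536071472214052640000)*x^1 + (343552334127399149352820559288090133073/16922300842946808577143555424842240000)*x^0)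 * eE x + ((3719746275049357342612163195924729639/406135220230723405851445330196213760000)*x^7 + (-36974248630969746418914512622807694967/1624540880922893623405781320784855040000)*x^6 + (16174800748016462111101443266211277459/249929366295829788216274049351516160000)*x^5 + (-398536195761716792116225172485255553119/3249081761845787246811562641569710080000)*x^4 + (27694419628737014294347571302292231249/1624540880922893623405781320784855040000)*x^3 + (18317382445591063828976424198203539979/203067610115361702925722665098106880000)*x^2 + (-8898799413737124236938922864565300613/2166054507897191497874375094379806720000)*x^1 + (-18086340584787166525306658700311992267/1083027253948595748937187547189903360000)*x^0) * nf x = 1 := by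
  simp only [eE, nf]; ring

lemma e_zero_ne {x : ℂ} (h : eE x = 0) : x ≠ 0 := by
  rintro rfl; norm_num [eE] at h

lemma c1_ne {x : ℂ} (h : eE x = 0) : c1 x ≠ 0 := by
  intro h0
  have hb := bez_c1 x
  rw [h, h0, mul_zero, mul_zero, add_zero] at hb
  exact zero_ne_one hb

lemma c0_ne {x : ℂ} (h : eE x = 0) : c0 x ≠ 0 := by
  intro h0
  have hb := bez_c0 x
  rw [h, h0, mul_zero, mul_zero, add_zero] at hb
  exact zero_ne_one hb

lemma nf_ne {x : ℂ} (h : eE x = 0) : nf x ≠ 0 := by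
  intro h0
  have hb := bez_n x
  rw [h, h0, mul_zero, mul_zero, add_zero] at hb
  exact zero_ne_one hb

/- ### Calculus -/

noncomputable def d1 (x y : ℂ) : ℂ :=
  3 - (x^2)⁻¹*y - 4*(x^2)⁻¹ - (x^2)⁻¹*y⁻¹ - (5/2)*y⁻¹ + 2*x*y⁻¹

noncomputable def d2 (x y : ℂ) : ℂ :=
  4 + x⁻¹ - x⁻¹*(y^2)⁻¹ - (1/2)*(y^2)⁻¹ + (5/2)*x*(y^2)⁻¹ - x^2*(y^2)⁻¹

lemma hasDerivAt_W1 (y : ℂ) {x : ℂ} (hx : x ≠ 0) :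
    HasDerivAt (fun z => W z y) (d1 x y) x := by
  have I := hasDerivAt_inv hx
  have h := (hasDerivAt_id x).const_mul (3:ℂ)
    |>.add (hasDerivAt_const x (4*y))
    |>.add (I.mul_const y)
    |>.add (I.const_mul (4:ℂ))
    |>.add (I.mul_const y⁻¹)
    |>.add (hasDerivAt_const x ((1/2)*y⁻¹))
    |>.sub (((hasDerivAt_id x).const_mul ((5:ℂ)/2)).mul_const y⁻¹)
    |>.add ((hasDerivAt_pow 2 x).mul_const y⁻¹)
  have h2 : HasDerivAt (fun z => W z y)
      (3*1 + 0 + (-(x^2)⁻¹*y) + (4*(-(x^2)⁻¹)) + (-(x^2)⁻¹*y⁻¹) + 0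
        - (5:ℂ)/2*1*y⁻¹ + (2:ℕ)*x^(2-1)*y⁻¹) x := h
  have hval : (3*1 + 0 + (-(x^2)⁻¹*y) + (4*(-(x^2)⁻¹)) + (-(x^2)⁻¹*y⁻¹) + 0
        - (5:ℂ)/2*1*y⁻¹ + (2:ℕ)*x^(2-1)*y⁻¹) = d1 x y := by
    simp only [d1]
    push_cast
    ring
  rwa [hval] at h2

lemma hasDerivAt_W2 (x : ℂ) {y : ℂ} (hy : y ≠ 0) :
    HasDerivAt (fun w => W x w) (d2 x y) y := by
  have I := hasDerivAt_inv hy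
  have h := (hasDerivAt_const y (3*x))
    |>.add ((hasDerivAt_id y).const_mul (4:ℂ))
    |>.add ((hasDerivAt_id y).const_mul x⁻¹)
    |>.add (hasDerivAt_const y (4*x⁻¹))
    |>.add (I.const_mul x⁻¹)
    |>.add (I.const_mul ((1:ℂ)/2))
    |>.sub (I.const_mul ((5/2)*x))
    |>.add (I.const_mul (x^2))
  have h2 : HasDerivAt (fun w => W x w)
      (0 + 4*1 + x⁻¹*1 + 0 + x⁻¹*(-(y^2)⁻¹) + (1:ℂ)/2*(-(y^2)⁻¹)
        - (5/2)*x*(-(y^2)⁻¹) + x^2*(-(y^2)⁻¹)) y := h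
  have hval : (0 + 4*1 + x⁻¹*1 + 0 + x⁻¹*(-(y^2)⁻¹) + (1:ℂ)/2*(-(y^2)⁻¹)
        - (5/2)*x*(-(y^2)⁻¹) + x^2*(-(y^2)⁻¹)) = d2 x y := by
    simp only [d2]; ring
  rwa [hval] at h2

lemma deriv_W1 (y : ℂ) {x : ℂ} (hx : x ≠ 0) :
    deriv (fun z => W z y) x = d1 x y := (hasDerivAt_W1 y hx).deriv

lemma deriv_W2 (x : ℂ) {y : ℂ} (hy : y ≠ 0) :
    deriv (fun w => W x w) y = d2 x y := (hasDerivAt_W2 x hy).deriv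

lemma deriv2_11 {x y : ℂ} (hx : x ≠ 0) (hy : y ≠ 0) :
    deriv (deriv (fun z => W z y)) x = (2*x^3 + 2*y^2 + 8*y + 2) / (x^3*y) := by
  have hev : deriv (fun z => W z y) =ᶠ[nhds x] fun z => d1 z y := by
    filter_upwards [isOpen_ne.mem_nhds hx] with z hz
    exact deriv_W1 y hz
  rw [hev.deriv_eq]
  have J := (hasDerivAt_pow 2 x).inv (pow_ne_zero 2 hx)
  have h := (hasDerivAt_const x (3:ℂ))
    |>.sub (J.mul_const y)
    |>.sub (J.const_mul (4:ℂ))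
    |>.sub (J.mul_const y⁻¹)
    |>.sub (hasDerivAt_const x ((5/2)*y⁻¹))
    |>.add (((hasDerivAt_id x).const_mul (2:ℂ)).mul_const y⁻¹)
  have h2 : HasDerivAt (fun z => d1 z y)
      (0 - (-((2:ℕ)*x^(2-1)) / (x^2)^2 * y) - 4*(-((2:ℕ)*x^(2-1)) / (x^2)^2)
        - (-((2:ℕ)*x^(2-1)) / (x^2)^2 * y⁻¹) - 0 + 2*1*y⁻¹) x := h
  rw [h2.deriv]
  have hu : x * x⁻¹ = 1 := mul_inv_cancel₀ hx
  have hv : y * y⁻¹ = 1 := mul_inv_cancel₀ hy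
  linear_combination ((-2)*x^0*y^0*x⁻¹^0*y⁻¹^1 + 8*x^0*y^0*x⁻¹^3*y⁻¹^0 + 2*x^0*y^0*x⁻¹^3*y⁻¹^1 + 2*x^0*y^1*x⁻¹^3*y⁻¹^0 + (-2)*x^1*y^0*x⁻¹^1*y⁻¹^1 + (-2)*x^2*y^0*x⁻¹^2*y⁻¹^1) * hu + ((-8)*x^0*y^0*x⁻¹^3*y⁻¹^0 + (-2)*x^0*y^1*x⁻¹^3*y⁻¹^0) * hv

lemma deriv2_22 {x y : ℂ} (hx : x ≠ 0) (hy : y ≠ 0) :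
    deriv (deriv (fun w => W x w)) y = (2*x^3 - 5*x^2 + x + 2) / (x*y^3) := by
  have hev : deriv (fun w => W x w) =ᶠ[nhds y] fun w => d2 x w := by
    filter_upwards [isOpen_ne.mem_nhds hy] with w hw
    exact deriv_W2 x hw
  rw [hev.deriv_eq]
  have J := (hasDerivAt_pow 2 y).inv (pow_ne_zero 2 hy)
  have h := (hasDerivAt_const y (4:ℂ))
    |>.add (hasDerivAt_const y x⁻¹)
    |>.sub (J.const_mul x⁻¹)
    |>.sub (J.const_mul ((1:ℂ)/2))
    |>.add (J.const_mul ((5/2)*x))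
    |>.sub (J.const_mul (x^2))
  have h2 : HasDerivAt (fun w => d2 x w)
      (0 + 0 - x⁻¹*(-((2:ℕ)*y^(2-1)) / (y^2)^2) - (1:ℂ)/2*(-((2:ℕ)*y^(2-1)) / (y^2)^2)
        + (5/2)*x*(-((2:ℕ)*y^(2-1)) / (y^2)^2) - x^2*(-((2:ℕ)*y^(2-1)) / (y^2)^2)) y := h
  rw [h2.deriv]
  have hu : x * x⁻¹ = 1 := mul_inv_cancel₀ hx
  have hv : y * y⁻¹ = 1 := mul_inv_cancel₀ hy
  linear_combination ((-1)*x^0*y^0*x⁻¹^0*y⁻¹^3 + 5*x^1*y^0*x⁻¹^0*y⁻¹^3 + (-2)*x^2*y^0*x⁻¹^0*y⁻¹^3) * hu + (1*x^0*y^0*x⁻¹^0*y⁻¹^3 + 2*x^0*y^0*x⁻¹^1*y⁻¹^3 + (-5)*x^1*y^0*x⁻¹^0*y⁻¹^3 + 2*x^2*y^0*x⁻¹^0*y⁻¹^3) * hv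

lemma deriv2_12 {x y : ℂ} (hx : x ≠ 0) (hy : y ≠ 0) :
    deriv (fun w => deriv (fun z => W z w) x) y
      = (-2*x^3 + (5/2)*x^2 - y^2 + 1) / (x^2*y^2) := by
  have hfun : (fun w => deriv (fun z => W z w) x) = fun w => d1 x w :=
    funext fun w => deriv_W1 w hx
  rw [hfun]
  have I := hasDerivAt_inv hy
  have h := (hasDerivAt_const y (3:ℂ))
    |>.sub ((hasDerivAt_id y).const_mul ((x^2)⁻¹))
    |>.sub (hasDerivAt_const y (4*(x^2)⁻¹))
    |>.sub (I.const_mul ((x^2)⁻¹))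
    |>.sub (I.const_mul ((5:ℂ)/2))
    |>.add (I.const_mul (2*x))
  have h2 : HasDerivAt (fun w => d1 x w)
      (0 - (x^2)⁻¹*1 - 0 - (x^2)⁻¹*(-(y^2)⁻¹) - (5:ℂ)/2*(-(y^2)⁻¹) + 2*x*(-(y^2)⁻¹)) y := h
  rw [h2.deriv]
  have hu : x * x⁻¹ = 1 := mul_inv_cancel₀ hx
  have hv : y * y⁻¹ = 1 := mul_inv_cancel₀ hy
  linear_combination ((-5/2)*x^0*y^0*x⁻¹^0*y⁻¹^2 + 2*x^1*y^0*x⁻¹^0*y⁻¹^2 + (-5/2)*x^1*y^0*x⁻¹^1*y⁻¹^2 + 2*x^2*y^0*x⁻¹^1*y⁻¹^2) * hu + (1*x^0*y^0*x⁻¹^2*y⁻¹^0 + 1*x^0*y^1*x⁻¹^2*y⁻¹^1) * hv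

/- ### Critical point characterization -/

lemma crit_iff (p : ℂ × ℂ) :
    IsCritPt p ↔ p.1 ≠ 0 ∧ p.2 ≠ 0 ∧ Pp p.1 p.2 = 0 ∧ Qq p.1 p.2 = 0 := by
  obtain ⟨x, y⟩ := p
  simp only [IsCritPt]
  constructor
  · rintro ⟨hx, hy, h1, h2⟩
    rw [deriv_W1 _ hx] at h1
    rw [deriv_W2 _ hy] at h2
    refine ⟨hx, hy, ?_, ?_⟩
    · simp only [d1] at h1
      simp only [Pp]
      have hu : x * x⁻¹ = 1 := mul_inv_cancel₀ hx
      have hv : y * y⁻¹ = 1 := mul_inv_cancel₀ hy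
      linear_combination (2*x^2*y) * h1 + (8*x^0*y^1*x⁻¹^0*y⁻¹^0 + 2*x^0*y^1*x⁻¹^0*y⁻¹^1 + 2*x^0*y^2*x⁻¹^0*y⁻¹^0 + 8*x^1*y^1*x⁻¹^1*y⁻¹^0 + 2*x^1*y^1*x⁻¹^1*y⁻¹^1 + 2*x^1*y^2*x⁻¹^1*y⁻¹^0) * hu + (2*x^0*y^0*x⁻¹^0*y⁻¹^0 + 5*x^2*y^0*x⁻¹^0*y⁻¹^0 + (-4)*x^3*y^0*x⁻¹^0*y⁻¹^0) * hv
    · simp only [d2] at h2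
      simp only [Qq]
      have hu : x * x⁻¹ = 1 := mul_inv_cancel₀ hx
      have hv : y * y⁻¹ = 1 := mul_inv_cancel₀ hy
      linear_combination (2*x*y^2) * h2 + ((-2)*x^0*y^2*x⁻¹^0*y⁻¹^0 + 2*x^0*y^2*x⁻¹^0*y⁻¹^2) * hu + (2*x^0*y^0*x⁻¹^0*y⁻¹^0 + 2*x^0*y^1*x⁻¹^0*y⁻¹^1 + 1*x^1*y^0*x⁻¹^0*y⁻¹^0 + 1*x^1*y^1*x⁻¹^0*y⁻¹^1 + (-5)*x^2*y^0*x⁻¹^0*y⁻¹^0 + (-5)*x^2*y^1*x⁻¹^0*y⁻¹^1 + 2*x^3*y^0*x⁻¹^0*y⁻¹^0 + 2*x^3*y^1*x⁻¹^0*y⁻¹^1) * hv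
  · rintro ⟨hx, hy, h1, h2⟩
    refine ⟨hx, hy, ?_, ?_⟩
    · rw [deriv_W1 _ hx]
      simp only [Pp] at h1
      simp only [d1]
      have hu : x * x⁻¹ = 1 := mul_inv_cancel₀ hx
      have hv : y * y⁻¹ = 1 := mul_inv_cancel₀ hy
      linear_combination ((1/2)*x⁻¹^2*y⁻¹) * h1 + ((5/2)*x^0*y^0*x⁻¹^0*y⁻¹^1 + (-3)*x^0*y^1*x⁻¹^0*y⁻¹^1 + (-2)*x^1*y^0*x⁻¹^0*y⁻¹^1 + (5/2)*x^1*y^0*x⁻¹^1*y⁻¹^1 + (-3)*x^1*y^1*x⁻¹^1*y⁻¹^1 + (-2)*x^2*y^0*x⁻¹^1*y⁻¹^1) * hu + ((-3)*x^0*y^0*x⁻¹^0*y⁻¹^0 + 4*x^0*y^0*x⁻¹^2*y⁻¹^0 + 1*x^0*y^1*x⁻¹^2*y⁻¹^0) * hv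
    · rw [deriv_W2 _ hy]
      simp only [Qq] at h2
      simp only [d2]
      have hu : x * x⁻¹ = 1 := mul_inv_cancel₀ hx
      have hv : y * y⁻¹ = 1 := mul_inv_cancel₀ hy
      linear_combination ((1/2)*x⁻¹*y⁻¹^2) * h2 + ((1/2)*x^0*y^0*x⁻¹^0*y⁻¹^2 + (-4)*x^0*y^2*x⁻¹^0*y⁻¹^2 + (-5/2)*x^1*y^0*x⁻¹^0*y⁻¹^2 + 1*x^2*y^0*x⁻¹^0*y⁻¹^2) * hu + ((-4)*x^0*y^0*x⁻¹^0*y⁻¹^0 + (-1)*x^0*y^0*x⁻¹^1*y⁻¹^0 + (-4)*x^0*y^1*x⁻¹^0*y⁻¹^1 + (-1)*x^0*y^1*x⁻¹^1*y⁻¹^1) * hv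

noncomputable def Epoly : ℂ[X] :=
  448*X^8 - 1008*X^7 + 2904*X^6 - 5256*X^5 - 576*X^4 + 4608*X^3 + 836*X^2 - 864*X - 192

lemma Epoly_natDegree : Epoly.natDegree = 8 := by
  unfold Epoly; compute_degree!

lemma Epoly_ne : Epoly ≠ 0 := by
  intro h
  have := Epoly_natDegree
  rw [h] at this
  simp at this

lemma aeval_Epoly (a : ℂ) : (aeval a) Epoly = eE a := by
  simp only [Epoly, eE, map_sub, map_add, map_mul, map_pow, map_ofNat, aeval_X]
  ring

lemma mem_rs (a : ℂ) : a ∈ Epoly.rootSet ℂ ↔ eE a = 0 := by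
  rw [Polynomial.mem_rootSet, aeval_Epoly]
  exact ⟨fun h => h.2, fun h => ⟨Epoly_ne, h⟩⟩

lemma deriv_Epoly : derivative Epoly =
    3584*X^7 - 7056*X^6 + 17424*X^5 - 26280*X^4 - 2304*X^3 + 13824*X^2 + 1672*X - 864 := by
  unfold Epoly
  simp only [derivative_sub, derivative_add, derivative_mul, derivative_X_pow, derivative_X,
    derivative_ofNat, Polynomial.derivative_one, map_natCast, map_ofNat, Nat.cast_ofNat]
  ring

lemma Epoly_sep : Epoly.Separable := by
  rw [Polynomial.Separable]
  refine ⟨Polynomial.C ((1 : ℂ)/10467014751666157889318400) * ((-124649932076663068949888)*X^6 + 260356477224446905518356*X^5 + (-626786238767032443074372)*X^4 + 970297540226498862358706*X^3 + 28852587836327092684504*X^2 + (-569434394652309685667296)*X^1 + 72993976599472512562566*X^0),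
    Polynomial.C ((1 : ℂ)/10467014751666157889318400) * (15581241509582883618736*X^7 + (-36926783827626049207564)*X^6 + 104123891743806082619662*X^5 + (-192562385916485746407442)*X^4 + (-7130329612193270485736)*X^3 + 177792019079696889061664*X^2 + (-1287409047298797938307)*X^1 + (-28335484095792685533948)*X^0), ?_⟩
  rw [deriv_Epoly]
  have key : ((-124649932076663068949888)*X^6 + 260356477224446905518356*X^5 + (-626786238767032443074372)*X^4 + 970297540226498862358706*X^3 + 28852587836327092684504*X^2 + (-569434394652309685667296)*X^1 + 72993976599472512562566*X^0) * Epoly + (15581241509582883618736*X^7 + (-36926783827626049207564)*X^6 + 104123891743806082619662*X^5 + (-192562385916485746407442)*X^4 + (-7130329612193270485736)*X^3 + 177792019079696889061664*X^2 + (-1287409047298797938307)*X^1 + (-28335484095792685533948)*X^0) * (3584*X^7 - 7056*X^6 + 17424*X^5 - 26280*X^4 - 2304*X^3 + 13824*X^2 + 1672*X - 864) = ((10467014751666157889318400 : ℕ) : ℂ[X]) := by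
    unfold Epoly
    push_cast
    ring
  calc Polynomial.C ((1 : ℂ)/10467014751666157889318400) * ((-124649932076663068949888)*X^6 + 260356477224446905518356*X^5 + (-626786238767032443074372)*X^4 + 970297540226498862358706*X^3 + 28852587836327092684504*X^2 + (-569434394652309685667296)*X^1 + 72993976599472512562566*X^0) * Epoly
        + Polynomial.C ((1 : ℂ)/10467014751666157889318400) * (15581241509582883618736*X^7 + (-36926783827626049207564)*X^6 + 104123891743806082619662*X^5 + (-192562385916485746407442)*X^4 + (-7130329612193270485736)*X^3 + 177792019079696889061664*X^2 + (-1287409047298797938307)*X^1 + (-28335484095792685533948)*X^0) * (3584*X^7 - 7056*X^6 + 17424*X^5 - 26280*X^4 - 2304*X^3 + 13824*X^2 + 1672*X - 864)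
      = Polynomial.C ((1 : ℂ)/10467014751666157889318400) * (((-124649932076663068949888)*X^6 + 260356477224446905518356*X^5 + (-626786238767032443074372)*X^4 + 970297540226498862358706*X^3 + 28852587836327092684504*X^2 + (-569434394652309685667296)*X^1 + 72993976599472512562566*X^0) * Epoly + (15581241509582883618736*X^7 + (-36926783827626049207564)*X^6 + 104123891743806082619662*X^5 + (-192562385916485746407442)*X^4 + (-7130329612193270485736)*X^3 + 177792019079696889061664*X^2 + (-1287409047298797938307)*X^1 + (-28335484095792685533948)*X^0) * (3584*X^7 - 7056*X^6 + 17424*X^5 - 26280*X^4 - 2304*X^3 + 13824*X^2 + 1672*X - 864)) := by ring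
    _ = Polynomial.C ((1 : ℂ)/10467014751666157889318400) * ((10467014751666157889318400 : ℕ) : ℂ[X]) := by rw [key]
    _ = 1 := by
        rw [← Polynomial.C_eq_natCast, ← Polynomial.C_mul, ← Polynomial.C_1]
        norm_num

lemma rootSet_ncard : (Epoly.rootSet ℂ).ncard = 8 := by
  have hcard := Polynomial.card_rootSet_eq_natDegree Epoly_sep
    (IsAlgClosed.splits (k := ℂ) (Epoly.map (algebraMap ℂ ℂ)))
  rw [Epoly_natDegree] at hcard
  rw [← Nat.card_coe_set_eq, Nat.card_eq_fintype_card]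
  convert hcard

lemma crit_eq_image :
    {p : ℂ × ℂ | IsCritPt p} = (fun a => (a, -(c0 a)/(c1 a))) '' (Epoly.rootSet ℂ) := by
  ext p
  simp only [Set.mem_setOf_eq, Set.mem_image, crit_iff, mem_rs]
  constructor
  · rintro ⟨hx, hy, hP, hQ⟩
    have he : eE p.1 = 0 := by rw [← idE p.1 p.2, hP, hQ]; ring
    have hL : c1 p.1 * p.2 + c0 p.1 = 0 := by rw [← idL p.1 p.2, hP, hQ]; ring
    have hc1 := c1_ne he
    refine ⟨p.1, he, ?_⟩
    have hy2 : p.2 = -(c0 p.1)/(c1 p.1) := by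
      field_simp
      linear_combination hL
    rw [← hy2]
  · rintro ⟨a, he, rfl⟩
    have hx : a ≠ 0 := e_zero_ne he
    have hc1 := c1_ne he
    have hc0 := c0_ne he
    set y := -(c0 a)/(c1 a) with hydef
    have hy : y ≠ 0 := div_ne_zero (neg_ne_zero.mpr hc0) hc1
    have hL : c1 a * y + c0 a = 0 := by
      rw [hydef]
      field_simp
      ring
    refine ⟨hx, hy, ?_, ?_⟩
    · have hid := idP a y
      rw [hL, he, mul_zero, mul_zero, add_zero] at hid
      exact (mul_eq_zero.mp hid).resolve_left (pow_ne_zero 2 hc1)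
    · have hid := idQ a y
      rw [hL, he, mul_zero, mul_zero, add_zero] at hid
      exact (mul_eq_zero.mp hid).resolve_left (pow_ne_zero 2 hc1)

lemma hess_eq {p : ℂ × ℂ} (hx : p.1 ≠ 0) (hy : p.2 ≠ 0) :
    hessDet p = Nf p.1 p.2 / (p.1^4 * p.2^4) := by
  rw [hessDet, deriv2_11 hx hy, deriv2_22 hx hy, deriv2_12 hx hy]
  simp only [Nf]
  ring

end WC

/-- `W` has exactly 8 critical points in `(ℂ∖{0})²`, and each of them is
nondegenerate (nonvanishing Hessian determinant). -/
theorem W_critical_points :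
    {p : ℂ × ℂ | IsCritPt p}.ncard = 8 ∧
      ∀ p : ℂ × ℂ, IsCritPt p → hessDet p ≠ 0 := by
  constructor
  · rw [WC.crit_eq_image, Set.ncard_image_of_injective _ (fun a b h => congrArg Prod.fst h),
      WC.rootSet_ncard]
  · intro p hp
    obtain ⟨hx, hy, hP, hQ⟩ := (WC.crit_iff p).mp hp
    have he : WC.eE p.1 = 0 := by rw [← WC.idE p.1 p.2, hP, hQ]; ring
    have hL : WC.c1 p.1 * p.2 + WC.c0 p.1 = 0 := by rw [← WC.idL p.1 p.2, hP, hQ]; ring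
    have hN : WC.Nf p.1 p.2 ≠ 0 := by
      intro h0
      have hid := WC.idN p.1 p.2
      rw [hL, h0, mul_zero, mul_zero, zero_add] at hid
      exact WC.nf_ne he hid.symm
    rw [WC.hess_eq hx hy]
    exact div_ne_zero hN (mul_ne_zero (pow_ne_zero 4 hx) (pow_ne_zero 4 hy))
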